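/- Let s ≥ 0 and let T be a sublinear operator satisfying the modular weak-type bound |{x : |Tf(x)| > λ}| ≤ C₀ ∫ (|f|/λ) log^s(e + |f|/λ) dx for all λ > 0. Then for every ϱ ∈ (0,1) and every cube Q ⊂ ℝⁿ, (|Q|^{-1} ∫_Q |T(fχ_Q)(x)|^ϱ dx)^{1/ϱ} ≤ C ‖f‖_{L(log L)^s, Q}, where C depends only on n, s, ϱ, C₀. -/

import Mathlib

open MeasureTheory Set
open scoped ENNReal

/-- The Luxemburg norm `‖f‖_{L(log L)^s, Q}` on a set `Q ⊂ ℝⁿ`. -/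
noncomputable def luxNorm (n : ℕ) (s : ℝ) (Q : Set (Fin n → ℝ))
    (f : (Fin n → ℝ) → ℝ) : ℝ≥0∞ :=
  ⨅ (lam : ℝ) (_ : 0 < lam ∧
      ∫⁻ y in Q, ENNReal.ofReal
          ((|f y| / lam) * (Real.log (Real.exp 1 + |f y| / lam)) ^ s)
        ≤ volume Q),
    ENNReal.ofReal lam

/-- Lemma 2.2 of the paper: a Kolmogorov-type inequality. If a sublinear
operator `T` satisfies the modular weak-type bound
`|{|Tf| > λ}| ≤ C₀ ∫ (|f|/λ) log^s(e+|f|/λ)`, then for every `ϱ ∈ (0,1)` and cube `Q`,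
`(|Q|⁻¹ ∫_Q |T(fχ_Q)|^ϱ)^{1/ϱ} ≤ C ‖f‖_{L(log L)^s, Q}`. -/
theorem stmt_8 (n : ℕ) (s C₀ : ℝ) (hs : 0 ≤ s) (hC₀ : 0 < C₀)
    (T : ((Fin n → ℝ) → ℝ) → (Fin n → ℝ) → ℝ)
    (hsub : ∀ f g : (Fin n → ℝ) → ℝ, ∀ x, |T (f + g) x| ≤ |T f x| + |T g x|)
    (hweak : ∀ (f : (Fin n → ℝ) → ℝ) (lam : ℝ), 0 < lam →
      volume {x | lam < |T f x|}
        ≤ ENNReal.ofReal C₀ *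
          ∫⁻ x, ENNReal.ofReal
            ((|f x| / lam) * (Real.log (Real.exp 1 + |f x| / lam)) ^ s))
    (ϱ : ℝ) (hϱ : ϱ ∈ Set.Ioo (0 : ℝ) 1) :
    ∃ C : ℝ, 0 < C ∧
      ∀ (f : (Fin n → ℝ) → ℝ) (z : Fin n → ℝ) (r : ℝ), 0 < r →
        (((volume (Metric.closedBall z r))⁻¹
            * ∫⁻ x in Metric.closedBall z r,
                ENNReal.ofReal (|T ((Metric.closedBall z r).indicator f) x| ^ ϱ))
          ^ (1 / ϱ))
          ≤ ENNReal.ofReal C * luxNorm n s (Metric.closedBall z r) f := by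
  classical
  obtain ⟨hϱ0, hϱ1⟩ := hϱ
  set rr : ℝ := (2:ℝ) ^ (ϱ - 1) with hrr_def
  have hrr1 : rr < 1 := Real.rpow_lt_one_of_one_lt_of_neg one_lt_two (by linarith)
  have hrr0 : 0 < rr := Real.rpow_pos_of_pos two_pos _
  have hrrE : ENNReal.ofReal rr < 1 := ENNReal.ofReal_lt_one.mpr hrr1
  have hsub1 : (1 : ℝ≥0∞) - ENNReal.ofReal rr ≠ 0 := by
    rw [Ne, tsub_eq_zero_iff_le]
    exact not_le.mpr hrrE
  set Ktot : ℝ≥0∞ :=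
    1 + ENNReal.ofReal C₀ * (ENNReal.ofReal ((2:ℝ) ^ ϱ) * (1 - ENNReal.ofReal rr)⁻¹)
    with hKtot_def
  have hKne_top : Ktot ≠ ⊤ := by
    refine ENNReal.add_ne_top.mpr ⟨ENNReal.one_ne_top, ENNReal.mul_ne_top ENNReal.ofReal_ne_top
      (ENNReal.mul_ne_top ENNReal.ofReal_ne_top (ENNReal.inv_ne_top.mpr hsub1))⟩
  have hK1 : (1 : ℝ≥0∞) ≤ Ktot := le_self_add
  have hKr_ne_top : Ktot ^ (1/ϱ) ≠ ⊤ := ENNReal.rpow_ne_top_of_nonneg (by positivity) hKne_top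
  have hKr_one : (1 : ℝ≥0∞) ≤ Ktot ^ (1/ϱ) := by
    calc (1:ℝ≥0∞) = 1 ^ (1/ϱ) := (ENNReal.one_rpow _).symm
    _ ≤ Ktot ^ (1/ϱ) := ENNReal.rpow_le_rpow hK1 (by positivity)
  set C : ℝ := (Ktot ^ (1/ϱ)).toReal with hC_def
  have hCof : ENNReal.ofReal C = Ktot ^ (1/ϱ) := ENNReal.ofReal_toReal hKr_ne_top
  have hC0 : 0 < C := ENNReal.toReal_pos (by
    intro h; rw [h] at hKr_one; exact (not_le.mpr zero_lt_one) hKr_one) hKr_ne_top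
  refine ⟨C, hC0, ?_⟩
  intro f z r hr
  set Q := Metric.closedBall z r with hQ_def
  have hQm : MeasurableSet Q := measurableSet_closedBall
  have hQfin : volume Q ≠ ⊤ := measure_closedBall_lt_top.ne
  have hQpos : volume Q ≠ 0 := (Metric.measure_closedBall_pos volume z hr).ne'
  set g := T (Q.indicator f) with hg_def
  -- key estimate for each admissible lam
  have key : ∀ lam : ℝ, 0 < lam →
      (∫⁻ y in Q, ENNReal.ofReal
          ((|f y| / lam) * (Real.log (Real.exp 1 + |f y| / lam)) ^ s)) ≤ volume Q →
      ((volume Q)⁻¹ * ∫⁻ x in Q, ENNReal.ofReal (|g x| ^ ϱ)) ^ (1/ϱ)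
        ≤ Ktot ^ (1/ϱ) * ENNReal.ofReal lam := by
    intro lam hlam hmod
    -- weak-type bound at level 2^k * lam
    have hlevel : ∀ k : ℕ, volume {x | (2:ℝ)^k * lam < |g x|}
        ≤ ENNReal.ofReal C₀ * (ENNReal.ofReal (((2:ℝ)^k)⁻¹) * volume Q) := by
      intro k
      have h2k : (0:ℝ) < 2^k := by positivity
      have hlk : 0 < (2:ℝ)^k * lam := by positivity
      refine (hweak (Q.indicator f) ((2:ℝ)^k * lam) hlk).trans ?_
      refine mul_le_mul_right ?_ _
      have heq : (fun x => ENNReal.ofReal ((|Q.indicator f x| / ((2:ℝ)^k*lam)) *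
            (Real.log (Real.exp 1 + |Q.indicator f x| / ((2:ℝ)^k*lam))) ^ s))
          = Q.indicator (fun x => ENNReal.ofReal ((|f x| / ((2:ℝ)^k*lam)) *
            (Real.log (Real.exp 1 + |f x| / ((2:ℝ)^k*lam))) ^ s)) := by
        funext x
        by_cases hx : x ∈ Q
        · simp [Set.indicator_of_mem hx]
        · simp [Set.indicator_of_notMem hx]
      rw [heq, lintegral_indicator hQm]
      have hpt : ∀ x : Fin n → ℝ,
          ENNReal.ofReal ((|f x| / ((2:ℝ)^k*lam)) *
              (Real.log (Real.exp 1 + |f x| / ((2:ℝ)^k*lam))) ^ s)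
          ≤ ENNReal.ofReal (((2:ℝ)^k)⁻¹) *
            ENNReal.ofReal ((|f x| / lam) * (Real.log (Real.exp 1 + |f x| / lam)) ^ s) := by
        intro x
        rw [← ENNReal.ofReal_mul (by positivity)]
        apply ENNReal.ofReal_le_ofReal
        have hdiv : |f x| / ((2:ℝ)^k * lam) = ((2:ℝ)^k)⁻¹ * (|f x| / lam) := by
          field_simp
        rw [hdiv]
        have hb : (0:ℝ) ≤ |f x| / lam := by positivity
        have hc1 : ((2:ℝ)^k)⁻¹ ≤ 1 := inv_le_one_of_one_le₀ (one_le_pow₀ (by norm_num))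
        have hcb : ((2:ℝ)^k)⁻¹ * (|f x| / lam) ≤ |f x| / lam := mul_le_of_le_one_left hb hc1
        have hcb0 : (0:ℝ) ≤ ((2:ℝ)^k)⁻¹ * (|f x| / lam) := by positivity
        have he : (1:ℝ) ≤ Real.exp 1 + ((2:ℝ)^k)⁻¹ * (|f x| / lam) := by
          nlinarith [Real.exp_one_gt_d9]
        have hlog : Real.log (Real.exp 1 + ((2:ℝ)^k)⁻¹ * (|f x| / lam)) ^ s
            ≤ Real.log (Real.exp 1 + |f x| / lam) ^ s := by
          refine Real.rpow_le_rpow (Real.log_nonneg he) ?_ hs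
          refine Real.log_le_log (by linarith) (by linarith)
        calc ((2:ℝ)^k)⁻¹ * (|f x|/lam) *
              Real.log (Real.exp 1 + ((2:ℝ)^k)⁻¹*(|f x|/lam)) ^ s
            ≤ ((2:ℝ)^k)⁻¹ * (|f x|/lam) * Real.log (Real.exp 1 + |f x|/lam) ^ s :=
              mul_le_mul_of_nonneg_left hlog hcb0
          _ = ((2:ℝ)^k)⁻¹ * ((|f x|/lam) * Real.log (Real.exp 1 + |f x|/lam) ^ s) := by ring
      calc (∫⁻ x in Q, ENNReal.ofReal ((|f x| / ((2:ℝ)^k*lam)) *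
              (Real.log (Real.exp 1 + |f x| / ((2:ℝ)^k*lam))) ^ s))
          ≤ ∫⁻ x in Q, ENNReal.ofReal (((2:ℝ)^k)⁻¹) *
              ENNReal.ofReal ((|f x| / lam) * (Real.log (Real.exp 1 + |f x| / lam)) ^ s) :=
            lintegral_mono fun x => hpt x
        _ = ENNReal.ofReal (((2:ℝ)^k)⁻¹) * ∫⁻ x in Q,
              ENNReal.ofReal ((|f x| / lam) * (Real.log (Real.exp 1 + |f x| / lam)) ^ s) :=
            lintegral_const_mul' _ _ ENNReal.ofReal_ne_top
        _ ≤ ENNReal.ofReal (((2:ℝ)^k)⁻¹) * volume Q := mul_le_mul_right hmod _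
    -- measurable hulls of the level sets
    set E : ℕ → Set (Fin n → ℝ) := fun k => toMeasurable volume {x | (2:ℝ)^k * lam < |g x|}
      with hE_def
    have hEm : ∀ k, MeasurableSet (E k) := fun k => measurableSet_toMeasurable _ _
    have hEvol : ∀ k, volume (E k) ≤ ENNReal.ofReal C₀ * (ENNReal.ofReal (((2:ℝ)^k)⁻¹) * volume Q) := by
      intro k
      rw [hE_def, measure_toMeasurable]
      exact hlevel k
    -- pointwise domination
    have hpoint : ∀ x, ENNReal.ofReal (|g x| ^ ϱ) ≤
        ENNReal.ofReal (lam ^ ϱ) +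
          ∑' k : ℕ, (E k).indicator (fun _ => ENNReal.ofReal (((2:ℝ)^(k+1) * lam) ^ ϱ)) x := by
      intro x
      rcases le_or_gt (|g x|) lam with hle | hlt
      · exact le_trans (ENNReal.ofReal_le_ofReal
          (Real.rpow_le_rpow (abs_nonneg _) hle hϱ0.le)) le_self_add
      · obtain ⟨N, hN⟩ := pow_unbounded_of_one_lt (|g x| / lam) (one_lt_two (α := ℝ))
        have hNlt : |g x| < 2^N * lam := by
          rw [div_lt_iff₀ hlam] at hN
          linarith
        set P : ℕ → Prop := fun m => (2:ℝ)^m * lam < |g x| with hP_def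
        set m := Nat.findGreatest P N with hm_def
        have hPm : P m := Nat.findGreatest_spec (Nat.zero_le N) (by simpa [hP_def] using hlt)
        have hmN : m < N := by
          rcases lt_or_eq_of_le (Nat.findGreatest_le (P := P) N) with h | h
          · exact h
          · exfalso
            rw [← hm_def] at *
            rw [h] at hPm
            exact absurd hNlt (not_lt.mpr hPm.le)
        have hnot : ¬ P (m+1) := Nat.findGreatest_is_greatest (Nat.lt_succ_self m) hmN
        have hub : |g x| ≤ 2^(m+1) * lam := not_lt.mp hnot
        have hxE : x ∈ E m := subset_toMeasurable _ _ hPm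
        calc ENNReal.ofReal (|g x| ^ ϱ)
            ≤ ENNReal.ofReal (((2:ℝ)^(m+1) * lam) ^ ϱ) :=
              ENNReal.ofReal_le_ofReal (Real.rpow_le_rpow (abs_nonneg _) hub hϱ0.le)
          _ = (E m).indicator (fun _ => ENNReal.ofReal (((2:ℝ)^(m+1) * lam) ^ ϱ)) x := by
              rw [Set.indicator_of_mem hxE]
          _ ≤ ∑' k : ℕ, (E k).indicator
                (fun _ => ENNReal.ofReal (((2:ℝ)^(k+1) * lam) ^ ϱ)) x := ENNReal.le_tsum m
          _ ≤ _ := le_add_self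
    -- integrate the pointwise bound
    have hint : (∫⁻ x in Q, ENNReal.ofReal (|g x| ^ ϱ))
        ≤ ENNReal.ofReal (lam ^ ϱ) * volume Q +
          ∑' k : ℕ, ENNReal.ofReal (((2:ℝ)^(k+1) * lam) ^ ϱ) * volume (E k) := by
      calc (∫⁻ x in Q, ENNReal.ofReal (|g x| ^ ϱ))
          ≤ ∫⁻ x in Q, (ENNReal.ofReal (lam ^ ϱ) +
              ∑' k : ℕ, (E k).indicator (fun _ => ENNReal.ofReal (((2:ℝ)^(k+1) * lam) ^ ϱ)) x) :=
            lintegral_mono fun x => hpoint x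
        _ = (∫⁻ _x in Q, ENNReal.ofReal (lam ^ ϱ)) +
            ∫⁻ x in Q, ∑' k : ℕ, (E k).indicator
              (fun _ => ENNReal.ofReal (((2:ℝ)^(k+1) * lam) ^ ϱ)) x :=
            lintegral_add_left measurable_const _
        _ = ENNReal.ofReal (lam ^ ϱ) * volume Q +
            ∑' k : ℕ, ∫⁻ x in Q, (E k).indicator
              (fun _ => ENNReal.ofReal (((2:ℝ)^(k+1) * lam) ^ ϱ)) x := by
            rw [setLIntegral_const,
              lintegral_tsum fun k => (measurable_const.indicator (hEm k)).aemeasurable]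
        _ ≤ ENNReal.ofReal (lam ^ ϱ) * volume Q +
            ∑' k : ℕ, ENNReal.ofReal (((2:ℝ)^(k+1) * lam) ^ ϱ) * volume (E k) := by
            refine add_le_add_right (ENNReal.tsum_le_tsum fun k => ?_) _
            rw [lintegral_indicator_const (hEm k), Measure.restrict_apply (hEm k)]
            exact mul_le_mul_right (measure_mono Set.inter_subset_left) _
    -- bound the series
    have hreal : ∀ k : ℕ, ((2:ℝ)^(k+1) * lam)^ϱ * ((2:ℝ)^k)⁻¹ = lam^ϱ * ((2:ℝ)^ϱ * rr^k) := by
      intro k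
      have e1 : (((2:ℝ)^(k+1) : ℝ))^ϱ = (2:ℝ) ^ (((k:ℝ)+1) * ϱ) := by
        rw [← Real.rpow_natCast (2:ℝ) (k+1), ← Real.rpow_mul (by norm_num)]
        push_cast
        ring_nf
      have e2 : (((2:ℝ)^k)⁻¹ : ℝ) = (2:ℝ) ^ (-(k:ℝ)) := by
        rw [← Real.rpow_natCast (2:ℝ) k, ← Real.rpow_neg (by norm_num)]
      have e3 : rr ^ k = (2:ℝ) ^ ((ϱ-1) * (k:ℝ)) := by
        rw [hrr_def, ← Real.rpow_natCast ((2:ℝ)^(ϱ-1)) k, ← Real.rpow_mul (by norm_num)]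
      rw [Real.mul_rpow (by positivity) hlam.le, e1, e2, e3, ← Real.rpow_add two_pos]
      rw [mul_right_comm, ← Real.rpow_add two_pos]
      ring_nf
    have hsum : (∑' k : ℕ, ENNReal.ofReal (((2:ℝ)^(k+1) * lam) ^ ϱ) * volume (E k))
        ≤ ENNReal.ofReal (lam ^ ϱ) * volume Q *
          (ENNReal.ofReal C₀ * (ENNReal.ofReal ((2:ℝ) ^ ϱ) * (1 - ENNReal.ofReal rr)⁻¹)) := by
      have hterm : ∀ k : ℕ, ENNReal.ofReal (((2:ℝ)^(k+1) * lam) ^ ϱ) * volume (E k)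
          ≤ (ENNReal.ofReal (lam ^ ϱ) * volume Q *
              (ENNReal.ofReal C₀ * ENNReal.ofReal ((2:ℝ) ^ ϱ))) * ENNReal.ofReal rr ^ k := by
        intro k
        calc ENNReal.ofReal (((2:ℝ)^(k+1) * lam) ^ ϱ) * volume (E k)
            ≤ ENNReal.ofReal (((2:ℝ)^(k+1) * lam) ^ ϱ) *
                (ENNReal.ofReal C₀ * (ENNReal.ofReal (((2:ℝ)^k)⁻¹) * volume Q)) :=
              mul_le_mul_right (hEvol k) _
          _ = (ENNReal.ofReal (((2:ℝ)^(k+1) * lam) ^ ϱ) * ENNReal.ofReal (((2:ℝ)^k)⁻¹)) *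
                (ENNReal.ofReal C₀ * volume Q) := by ring
          _ = ENNReal.ofReal (((2:ℝ)^(k+1) * lam) ^ ϱ * ((2:ℝ)^k)⁻¹) *
                (ENNReal.ofReal C₀ * volume Q) := by
              rw [← ENNReal.ofReal_mul (by positivity)]
          _ = ENNReal.ofReal (lam ^ ϱ * ((2:ℝ)^ϱ * rr^k)) * (ENNReal.ofReal C₀ * volume Q) := by
              rw [hreal k]
          _ = (ENNReal.ofReal (lam ^ ϱ) * volume Q *
                (ENNReal.ofReal C₀ * ENNReal.ofReal ((2:ℝ) ^ ϱ))) * ENNReal.ofReal rr ^ k := by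
              rw [ENNReal.ofReal_mul (by positivity), ENNReal.ofReal_mul (by positivity),
                ENNReal.ofReal_pow hrr0.le]
              ring
      calc (∑' k : ℕ, ENNReal.ofReal (((2:ℝ)^(k+1) * lam) ^ ϱ) * volume (E k))
          ≤ ∑' k : ℕ, (ENNReal.ofReal (lam ^ ϱ) * volume Q *
              (ENNReal.ofReal C₀ * ENNReal.ofReal ((2:ℝ) ^ ϱ))) * ENNReal.ofReal rr ^ k :=
            ENNReal.tsum_le_tsum hterm
        _ = (ENNReal.ofReal (lam ^ ϱ) * volume Q *
              (ENNReal.ofReal C₀ * ENNReal.ofReal ((2:ℝ) ^ ϱ))) * ∑' k : ℕ, ENNReal.ofReal rr ^ k :=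
            ENNReal.tsum_mul_left
        _ = (ENNReal.ofReal (lam ^ ϱ) * volume Q *
              (ENNReal.ofReal C₀ * ENNReal.ofReal ((2:ℝ) ^ ϱ))) * (1 - ENNReal.ofReal rr)⁻¹ := by
            rw [ENNReal.tsum_geometric]
        _ = ENNReal.ofReal (lam ^ ϱ) * volume Q *
              (ENNReal.ofReal C₀ * (ENNReal.ofReal ((2:ℝ) ^ ϱ) * (1 - ENNReal.ofReal rr)⁻¹)) := by
            ring
    -- total bound
    have htot : (∫⁻ x in Q, ENNReal.ofReal (|g x| ^ ϱ))
        ≤ ENNReal.ofReal (lam ^ ϱ) * volume Q * Ktot := by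
      refine hint.trans ?_
      rw [hKtot_def, mul_add, mul_one]
      exact add_le_add_right hsum _
    have hmain : (volume Q)⁻¹ * ∫⁻ x in Q, ENNReal.ofReal (|g x| ^ ϱ)
        ≤ ENNReal.ofReal (lam ^ ϱ) * Ktot := by
      calc (volume Q)⁻¹ * ∫⁻ x in Q, ENNReal.ofReal (|g x| ^ ϱ)
          ≤ (volume Q)⁻¹ * (ENNReal.ofReal (lam ^ ϱ) * volume Q * Ktot) :=
            mul_le_mul_right htot _
        _ = ENNReal.ofReal (lam ^ ϱ) * Ktot * ((volume Q)⁻¹ * volume Q) := by ring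
        _ = ENNReal.ofReal (lam ^ ϱ) * Ktot := by
            rw [ENNReal.inv_mul_cancel hQpos hQfin, mul_one]
    calc ((volume Q)⁻¹ * ∫⁻ x in Q, ENNReal.ofReal (|g x| ^ ϱ)) ^ (1/ϱ)
        ≤ (ENNReal.ofReal (lam ^ ϱ) * Ktot) ^ (1/ϱ) :=
          ENNReal.rpow_le_rpow hmain (by positivity)
      _ = ENNReal.ofReal (lam ^ ϱ) ^ (1/ϱ) * Ktot ^ (1/ϱ) :=
          ENNReal.mul_rpow_of_nonneg _ _ (by positivity)
      _ = ENNReal.ofReal lam * Ktot ^ (1/ϱ) := by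
          have hlp : (lam ^ ϱ) ^ (1/ϱ) = lam := by
            rw [← Real.rpow_mul hlam.le, mul_one_div, div_self hϱ0.ne', Real.rpow_one]
          rw [ENNReal.ofReal_rpow_of_pos (Real.rpow_pos_of_pos hlam ϱ), hlp]
      _ = Ktot ^ (1/ϱ) * ENNReal.ofReal lam := mul_comm _ _
  -- conclude via the infimum
  have hCne0 : ENNReal.ofReal C ≠ 0 := (ENNReal.ofReal_pos.mpr hC0).ne'
  have hdiv : (((volume Q)⁻¹ * ∫⁻ x in Q, ENNReal.ofReal (|g x| ^ ϱ)) ^ (1/ϱ)) / ENNReal.ofReal C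
      ≤ luxNorm n s Q f := by
    rw [luxNorm]
    refine le_iInf fun lam => le_iInf fun hlam => ?_
    refine ENNReal.div_le_of_le_mul ?_
    rw [hCof]
    calc (((volume Q)⁻¹ * ∫⁻ x in Q, ENNReal.ofReal (|g x| ^ ϱ)) ^ (1/ϱ))
        ≤ Ktot ^ (1/ϱ) * ENNReal.ofReal lam := key lam hlam.1 hlam.2
      _ = ENNReal.ofReal lam * Ktot ^ (1/ϱ) := mul_comm _ _
  have := (ENNReal.div_le_iff_le_mul (Or.inl hCne0) (Or.inl ENNReal.ofReal_ne_top)).mp hdiv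
  calc (((volume Q)⁻¹ * ∫⁻ x in Q, ENNReal.ofReal (|g x| ^ ϱ)) ^ (1/ϱ))
      ≤ luxNorm n s Q f * ENNReal.ofReal C := this
    _ = ENNReal.ofReal C * luxNorm n s Q f := mul_comm _ _
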